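/- arXiv:1604.02529 — 2 statements merged into one kernel-verified Lean document; each statement's English description precedes it below -/
import Mathlib

section
/- Let γ ∈ ℂ be a nonzero algebraic number that is not a root of unity. Then there exists a place v of the number field ℚ(γ) (archimedean or non-archimedean) such that |γ|_v > 1. -/
open NumberField IsDedekindDomain
open scoped nonZeroDivisors

/-- The absolute value on `K` attached to a height-one prime of the ring of integers. -/
noncomputable def adicAbsVal {K : Type*} [Field K] [NumberField K]
    (v : HeightOneSpectrum (𝓞 K)) : AbsoluteValue K ℝ where
  toFun y := ((WithZeroMulInt.toNNReal (by norm_num : (2 : NNReal) ≠ 0) (v.valuation K y) :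
    NNReal) : ℝ)
  map_mul' a b := by
    rw [map_mul, map_mul]; push_cast; ring
  nonneg' y := NNReal.coe_nonneg _
  eq_zero' y := by
    constructor
    · intro h
      replace h : ((WithZeroMulInt.toNNReal (by norm_num : (2 : NNReal) ≠ 0) (v.valuation K y) :
        NNReal) : ℝ) = 0 := h
      have h0 : WithZeroMulInt.toNNReal (by norm_num : (2 : NNReal) ≠ 0) (v.valuation K y) = 0 := by
        exact_mod_cast h
      by_contra hy
      exact WithZeroMulInt.toNNReal_ne_zero (by norm_num : (2 : NNReal) ≠ 0)
        ((Valuation.ne_zero_iff _).mpr hy) h0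
    · rintro rfl
      simp
  add_le' a b := by
    have hmono := (WithZeroMulInt.toNNReal_strictMono (by norm_num : (1 : NNReal) < 2)).monotone
    have h := (v.valuation K).map_add a b
    have h2 := hmono h
    have hmax : WithZeroMulInt.toNNReal (by norm_num : (2 : NNReal) ≠ 0)
        (max (v.valuation K a) (v.valuation K b)) =
        max (WithZeroMulInt.toNNReal (by norm_num : (2 : NNReal) ≠ 0) (v.valuation K a))
          (WithZeroMulInt.toNNReal (by norm_num : (2 : NNReal) ≠ 0) (v.valuation K b)) :=
      hmono.map_max
    rw [hmax] at h2
    calc ((WithZeroMulInt.toNNReal (by norm_num : (2 : NNReal) ≠ 0) (v.valuation K (a + b)) :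
        NNReal) : ℝ) ≤ _ := NNReal.coe_le_coe.mpr h2
    _ ≤ _ := by
        rw [NNReal.coe_max]
        exact max_le_add_of_nonneg (NNReal.coe_nonneg _) (NNReal.coe_nonneg _)

lemma adicAbsVal_lt {K : Type*} [Field K] [NumberField K]
    (v : HeightOneSpectrum (𝓞 K)) {y : K} (h : 1 < v.valuation K y) : 1 < adicAbsVal v y := by
  have hmono := WithZeroMulInt.toNNReal_strictMono (by norm_num : (1 : NNReal) < 2)
  have := hmono h
  rw [map_one] at this
  exact_mod_cast this

/-- Kronecker's theorem, integral case. -/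
lemma exists_infinitePlace_one_lt {K : Type*} [Field K] [NumberField K] {x : K}
    (hx0 : x ≠ 0) (hxi : IsIntegral ℤ x) (hru : ¬∃ n : ℕ, 0 < n ∧ x ^ n = 1) :
    ∃ w : InfinitePlace K, 1 < w x := by
  by_contra hcon
  push_neg at hcon
  -- the norm of x is a nonzero integer
  obtain ⟨m, hm⟩ := IsIntegrallyClosed.isIntegral_iff.mp (Algebra.isIntegral_norm ℚ hxi)
  have hm0 : m ≠ 0 := by
    rintro rfl
    rw [map_zero] at hm
    exact (Algebra.norm_ne_zero_iff.mpr hx0) hm.symm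
  have hNge : (1 : ℝ) ≤ ((|(Algebra.norm ℚ x)| : ℚ) : ℝ) := by
    rw [← hm]
    have h1 : (1 : ℤ) ≤ |m| := Int.one_le_abs (by exact_mod_cast hm0)
    simp only [eq_intCast]
    exact_mod_cast h1
  -- all infinite places are equal to one
  have hw1 : ∀ w : InfinitePlace K, w x = 1 := by
    intro w₀
    classical
    have hnonneg : ∀ w : InfinitePlace K, 0 ≤ w x := fun w => w.1.nonneg x
    have hprod := InfinitePlace.prod_eq_abs_norm x
    have hprod_le : ∏ w : InfinitePlace K, w x ^ w.mult ≤ w₀ x ^ w₀.mult := by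
      rw [← Finset.prod_erase_mul Finset.univ _ (Finset.mem_univ w₀)]
      have h1 : ∏ w ∈ Finset.univ.erase w₀, w x ^ w.mult ≤ 1 :=
        Finset.prod_le_one (fun w _ => pow_nonneg (hnonneg w) _)
          (fun w _ => pow_le_one₀ (hnonneg w) (hcon w))
      nlinarith [pow_nonneg (hnonneg w₀) w₀.mult, (pow_le_one₀ (hnonneg w₀) (hcon w₀) : (w₀ x) ^ w₀.mult ≤ 1)]
    have h1le : (1 : ℝ) ≤ w₀ x ^ w₀.mult := by
      calc (1 : ℝ) ≤ ((|(Algebra.norm ℚ x)| : ℚ) : ℝ) := hNge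
      _ = ∏ w : InfinitePlace K, w x ^ w.mult := hprod.symm
      _ ≤ w₀ x ^ w₀.mult := hprod_le
    have : 1 ≤ w₀ x := by
      by_contra hlt
      push_neg at hlt
      have := pow_lt_one₀ (hnonneg w₀) hlt (InfinitePlace.mult_ne_zero (w := w₀))
      linarith
    linarith [hcon w₀]
  -- hence all complex embeddings have norm one, so x is a root of unity
  have hφ : ∀ φ : K →+* ℂ, ‖φ x‖ = 1 := by
    intro φ
    have := hw1 (InfinitePlace.mk φ)
    rwa [InfinitePlace.apply] at this
  exact hru (by
    obtain ⟨n, hn, hxn⟩ := NumberField.Embeddings.pow_eq_one_of_norm_eq_one K ℂ hxi hφ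
    exact ⟨n, hn, hxn⟩)

/-- An element of a number field whose `v`-adic valuations are all at most one is integral. -/
lemma isIntegral_of_valuation_le_one {K : Type*} [Field K] [NumberField K] (x : K)
    (hle : ∀ v : HeightOneSpectrum (𝓞 K), v.valuation K x ≤ 1) : IsIntegral ℤ x := by
  by_cases hx0 : x = 0
  · exact hx0 ▸ isIntegral_zero
  obtain ⟨⟨n, d⟩, hx⟩ := IsLocalization.mk'_surjective (S := K) (nonZeroDivisors (𝓞 K)) x
  dsimp only at hx
  have hd0 : (algebraMap (𝓞 K) K) (d : 𝓞 K) ≠ 0 :=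
    map_ne_zero_of_mem_nonZeroDivisors _ (IsFractionRing.injective (𝓞 K) K) d.property
  have hn0 : n ≠ 0 := by
    rintro rfl
    rw [IsLocalization.mk'_eq_iff_eq_mul, map_zero] at hx
    rcases mul_eq_zero.mp hx.symm with h | h
    · exact hx0 h
    · exact hd0 h
  set I : FractionalIdeal (𝓞 K)⁰ K := FractionalIdeal.spanSingleton (𝓞 K)⁰ x with hIdef
  have hI0 : I ≠ 0 := by
    rw [hIdef, ne_eq, FractionalIdeal.spanSingleton_eq_zero_iff]
    exact hx0
  have haJ : I = FractionalIdeal.spanSingleton (𝓞 K)⁰ ((algebraMap (𝓞 K) K) (d : 𝓞 K))⁻¹ *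
      ↑(Ideal.span {n} : Ideal (𝓞 K)) := by
    rw [hIdef, FractionalIdeal.coeIdeal_span_singleton,
      FractionalIdeal.spanSingleton_mul_spanSingleton, ← hx]
    congr 1
    rw [IsFractionRing.mk'_eq_div, div_eq_mul_inv, mul_comm]
  -- all counts are nonnegative
  have hcount : ∀ v : HeightOneSpectrum (𝓞 K), 0 ≤ FractionalIdeal.count K v I := by
    intro v
    rw [FractionalIdeal.count_well_defined K v hI0 haJ]
    have hval := hle v
    rw [← hx, HeightOneSpectrum.valuation_of_mk'] at hval
    have hdval : v.intValuation (d : 𝓞 K) ≠ 0 := by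
      rw [HeightOneSpectrum.intValuation_apply]
      exact v.intValuation_ne_zero' d
    have hmul : v.intValuation n ≤ v.intValuation (d : 𝓞 K) := by
      have := mul_le_mul_left hval (v.intValuation (d : 𝓞 K))
      rwa [div_mul_cancel₀ _ hdval, one_mul] at this
    rw [HeightOneSpectrum.intValuation_apply, HeightOneSpectrum.intValuation_apply,
      HeightOneSpectrum.intValuationDef_if_neg v hn0,
      HeightOneSpectrum.intValuationDef_if_neg v (nonZeroDivisors.coe_ne_zero d)] at hmul
    rw [WithZero.exp_le_exp, neg_le_neg_iff] at hmul
    omega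
  -- build the integral ideal
  have hcoe : ((∏ᶠ v : HeightOneSpectrum (𝓞 K),
      v.asIdeal ^ (FractionalIdeal.count K v I).toNat : Ideal (𝓞 K)) :
        FractionalIdeal (𝓞 K)⁰ K) = I := by
    rw [FractionalIdeal.coeIdeal_finprod (𝓞 K)⁰ K (le_refl _)]
    have heq : ∀ v : HeightOneSpectrum (𝓞 K),
        ((v.asIdeal ^ (FractionalIdeal.count K v I).toNat : Ideal (𝓞 K)) :
          FractionalIdeal (𝓞 K)⁰ K) =
        (v.asIdeal : FractionalIdeal (𝓞 K)⁰ K) ^ (FractionalIdeal.count K v I) := by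
      intro v
      rw [FractionalIdeal.coeIdeal_pow, ← zpow_natCast, Int.toNat_of_nonneg (hcount v)]
    rw [finprod_congr heq]
    exact FractionalIdeal.finprod_heightOneSpectrum_factorization' K hI0
  have hxmem : x ∈ (1 : FractionalIdeal (𝓞 K)⁰ K) := by
    rw [← FractionalIdeal.spanSingleton_le_iff_mem, ← hIdef, ← hcoe]
    exact FractionalIdeal.coeIdeal_le_one
  obtain ⟨r, hr⟩ := FractionalIdeal.mem_one_iff _ |>.mp hxmem
  rw [← hr]
  exact NumberField.RingOfIntegers.isIntegral_coe r

open IntermediateField in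
theorem stmt_6 (γ : ℂ) (hγ0 : γ ≠ 0) (halg : IsAlgebraic ℚ γ)
    (hru : ¬∃ n : ℕ, 0 < n ∧ γ ^ n = 1) :
    ∃ v : AbsoluteValue ℚ⟮γ⟯ ℝ,
      1 < v ⟨γ, IntermediateField.mem_adjoin_simple_self ℚ γ⟩ := by
  haveI : FiniteDimensional ℚ ℚ⟮γ⟯ := IntermediateField.adjoin.finiteDimensional halg.isIntegral
  haveI : NumberField ℚ⟮γ⟯ := ⟨⟩
  set x : ℚ⟮γ⟯ := ⟨γ, IntermediateField.mem_adjoin_simple_self ℚ γ⟩ with hxdef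
  have hx0 : x ≠ 0 := by
    intro h
    apply hγ0
    exact congrArg Subtype.val h
  have hxru : ¬∃ n : ℕ, 0 < n ∧ x ^ n = 1 := by
    rintro ⟨n, hn, hxn⟩
    refine hru ⟨n, hn, ?_⟩
    have := congrArg Subtype.val hxn
    push_cast at this
    simpa using this
  by_cases hint : IsIntegral ℤ x
  · obtain ⟨w, hw⟩ := exists_infinitePlace_one_lt hx0 hint hxru
    exact ⟨w.1, hw⟩
  · have : ¬∀ v : HeightOneSpectrum (𝓞 ℚ⟮γ⟯), v.valuation ℚ⟮γ⟯ x ≤ 1 := fun h =>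
      hint (isIntegral_of_valuation_le_one x h)
    push_neg at this
    obtain ⟨v, hv⟩ := this
    exact ⟨adicAbsVal v, adicAbsVal_lt v hv⟩
end

section
/- Over a field of positive characteristic the conclusion of the orbit intersection theorem for affine maps fails: in 𝔽_p(t), let Φ₁(x) = t·x − t + 1 and Φ₂(x) = (t+1)·x. Then for all m, n ∈ ℕ₀, Φ₁^m(2) = t^m + 1 and Φ₂^n(1) = (t+1)^n, and the set {(m,n) ∈ ℕ₀² : Φ₁^m(2) = Φ₂^n(1)} equals {(p^k, p^k) : k ∈ ℕ₀}. -/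
open Polynomial

lemma key_pow (p : ℕ) [Fact p.Prime] : ∀ n : ℕ, 0 < n →
    ((X + 1 : Polynomial (ZMod p)) ^ n = X ^ n + 1) → ∃ k, n = p ^ k := by
  intro n
  induction n using Nat.strong_induction_on with
  | _ n ih =>
    intro hn h
    rcases eq_or_lt_of_le (show 1 ≤ n from hn) with h1 | h2
    · exact ⟨0, by rw [pow_zero]; omega⟩
    · -- n ≥ 2; look at coefficient n-1
      have hc := congrArg (fun q => Polynomial.coeff q (n - 1)) h
      simp only [coeff_X_add_one_pow, coeff_add, coeff_X_pow, coeff_one] at hc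
      rw [if_neg (by omega), if_neg (by omega)] at hc
      have hc' : ((n : ZMod p)) = 0 := by
        have : ((n.choose (n - 1) : ℕ) : ZMod p) = 0 := by simpa using hc
        rwa [Nat.choose_symm (by omega : 1 ≤ n), Nat.choose_one_right] at this
      have hdvd : p ∣ n := (ZMod.natCast_eq_zero_iff n p).mp hc'
      obtain ⟨m, rfl⟩ := hdvd
      have hp := (Fact.out : p.Prime).two_le
      have hm : 0 < m := by
        rcases Nat.eq_zero_or_pos m with rfl | hpos; · omega
        exact hpos
      have hmlt : m < p * m := by nlinarith
      have hfr : ((X + 1 : Polynomial (ZMod p)) ^ m) ^ p = ((X : Polynomial (ZMod p)) ^ m + 1) ^ p := by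
        rw [← pow_mul, mul_comm m p, h, add_pow_char, one_pow, ← pow_mul, mul_comm m p]
      have heq : (X + 1 : Polynomial (ZMod p)) ^ m = X ^ m + 1 :=
        frobenius_inj (Polynomial (ZMod p)) p hfr
      obtain ⟨k, hk⟩ := ih m hmlt hm heq
      exact ⟨k + 1, by rw [hk, pow_succ, mul_comm]⟩

theorem stmt_19 (p : ℕ) [Fact p.Prime]
    (Φ₁ Φ₂ : RatFunc (ZMod p) → RatFunc (ZMod p))
    (hΦ₁ : ∀ x, Φ₁ x = RatFunc.X * x - RatFunc.X + 1)
    (hΦ₂ : ∀ x, Φ₂ x = (RatFunc.X + 1) * x) :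
    (∀ m : ℕ, Φ₁^[m] 2 = RatFunc.X ^ m + 1) ∧
    (∀ n : ℕ, Φ₂^[n] 1 = (RatFunc.X + 1) ^ n) ∧
    {q : ℕ × ℕ | Φ₁^[q.1] 2 = Φ₂^[q.2] 1} =
      {q : ℕ × ℕ | ∃ k : ℕ, q = (p ^ k, p ^ k)} := by
  have H1 : ∀ m : ℕ, Φ₁^[m] 2 = RatFunc.X ^ m + 1 := by
    intro m
    induction m with
    | zero => norm_num
    | succ m ih =>
      rw [Function.iterate_succ_apply', ih, hΦ₁]
      ring
  have H2 : ∀ n : ℕ, Φ₂^[n] 1 = (RatFunc.X + 1) ^ n := by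
    intro n
    induction n with
    | zero => simp
    | succ n ih =>
      rw [Function.iterate_succ_apply', ih, hΦ₂]
      ring
  refine ⟨H1, H2, ?_⟩
  have hinj := RatFunc.algebraMap_injective (ZMod p)
  haveI : CharP (RatFunc (ZMod p)) p := charP_of_injective_algebraMap hinj p
  ext ⟨m, n⟩
  simp only [Set.mem_setOf_eq, H1, H2, Prod.mk.injEq, Prod.ext_iff]
  constructor
  · intro h
    have hpoly : (X + 1 : Polynomial (ZMod p)) ^ n = X ^ m + 1 := by
      apply hinj
      simp only [map_pow, map_add, map_one, RatFunc.algebraMap_X]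
      exact h.symm
    have hn0 : n ≠ 0 := by
      rintro rfl
      rw [pow_zero] at hpoly
      rcases Nat.eq_zero_or_pos m with rfl | hm
      · rw [pow_zero] at hpoly
        have : (1 : Polynomial (ZMod p)) = 0 := by linear_combination -hpoly
        exact one_ne_zero this
      · have : (X : Polynomial (ZMod p)) ^ m = 0 := by linear_combination -hpoly
        exact pow_ne_zero m X_ne_zero this
    have hmon : (X + 1 : Polynomial (ZMod p)).Monic := by
      simpa using monic_X_add_C (1 : ZMod p)
    have h1 : ((X + 1 : Polynomial (ZMod p)) ^ n).natDegree = n := by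
      have hX1 : (X + 1 : Polynomial (ZMod p)) = X + C 1 := by simp
      rw [hmon.natDegree_pow, hX1, natDegree_X_add_C, mul_one]
    have h2 : ((X : Polynomial (ZMod p)) ^ m + 1).natDegree = m := by
      simpa using (natDegree_X_pow_add_C (n := m) (r := (1 : ZMod p)))
    have hdeg : n = m := by rw [← h1, hpoly, h2]
    subst hdeg
    obtain ⟨k, hk⟩ := key_pow p n (Nat.pos_of_ne_zero hn0) hpoly
    exact ⟨k, hk, hk⟩
  · rintro ⟨k, rfl, rfl⟩
    rw [add_pow_char_pow]
    simp
end
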